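/- Let 𝒩 be a compact topological space, ν ↦ L_ν a continuous map from 𝒩 to the bounded linear operators from X to Y, and ν ↦ f_ν a continuous map from 𝒩 to Y with ‖f_ν‖ ≥ f₋ > ε for all ν. Assume there is a bounded self-adjoint operator Λ : Y → Y with ⟨Λ v, v⟩ > 0 for all v ≠ 0, such that ⟨L_ν L_ν* v, v⟩ ≥ ⟨Λ v, v⟩ for all ν ∈ 𝒩 and v ∈ Y. Suppose ν ↦ ṽ_ν assigns to each ν a nonzero solution of the Euler–Lagrange equation L_ν L_ν* ṽ_ν + ε ṽ_ν/‖ṽ_ν‖ − f_ν = 0. Then the family is uniformly bounded: there exists a constant v₊ such that ‖ṽ_ν‖ ≤ v₊ for all ν ∈ 𝒩. -/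

import Mathlib

open RealInnerProductSpace ContinuousLinearMap

lemma semi_cauchy_schwarz {Y : Type*} [NormedAddCommGroup Y] [InnerProductSpace ℝ Y]
    (Lam : Y →L[ℝ] Y) (hsym : ∀ x y : Y, ⟪Lam x, y⟫ = ⟪x, Lam y⟫)
    (hpos : ∀ x : Y, 0 ≤ ⟪Lam x, x⟫) (v : Y) :
    ‖Lam v‖ ^ 2 ≤ ‖Lam‖ * ⟪Lam v, v⟫ := by
  set w := Lam v with hw
  have key : discrim (⟪Lam w, w⟫) (2 * ‖w‖ ^ 2) (⟪Lam v, v⟫) ≤ 0 := by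
    apply discrim_le_zero
    intro x
    have h1 : ⟪Lam w, v⟫ = ‖w‖ ^ 2 := by
      rw [hsym, ← hw, real_inner_self_eq_norm_sq]
    have h2 : ⟪Lam v, w⟫ = ‖w‖ ^ 2 := by
      rw [← hw, real_inner_self_eq_norm_sq]
    have expand : ⟪Lam (v + x • w), v + x • w⟫
        = ⟪Lam w, w⟫ * (x * x) + (2 * ‖w‖ ^ 2) * x + ⟪Lam v, v⟫ := by
      simp only [map_add, map_smul, inner_add_left, inner_add_right,
        real_inner_smul_left, real_inner_smul_right, h1, h2]
      ring
    rw [← expand]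
    exact hpos _
  rw [discrim] at key
  have hcs2 : ⟪Lam w, w⟫ ≤ ‖Lam‖ * ‖w‖ ^ 2 := by
    calc ⟪Lam w, w⟫ ≤ ‖Lam w‖ * ‖w‖ := real_inner_le_norm _ _
    _ ≤ (‖Lam‖ * ‖w‖) * ‖w‖ := by
        gcongr
        exact Lam.le_opNorm w
    _ = ‖Lam‖ * ‖w‖ ^ 2 := by ring
  rcases eq_or_lt_of_le (norm_nonneg w) with h0 | h0
  · have : ‖w‖ = 0 := h0.symm
    rw [this]
    simpa using mul_nonneg (norm_nonneg Lam) (hpos v)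
  · -- ‖w‖^4 ≤ ⟪Lam w, w⟫ * ⟪Lam v, v⟫ ≤ ‖Lam‖ * ‖w‖^2 * ⟪Lam v, v⟫
    nlinarith [hpos v, hpos w, sq_nonneg ‖w‖, mul_pos h0 h0]

theorem parametrized_solutions_uniformly_bounded
    {X Y : Type*} [NormedAddCommGroup X] [InnerProductSpace ℝ X] [CompleteSpace X]
    [NormedAddCommGroup Y] [InnerProductSpace ℝ Y] [CompleteSpace Y]
    {N : Type*} [TopologicalSpace N] [CompactSpace N]
    (ε : ℝ) (hε : 0 < ε)
    (L : N → X →L[ℝ] Y) (hL : Continuous L)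
    (f : N → Y) (hf : Continuous f)
    (fm : ℝ) (hfm : ε < fm) (hflb : ∀ ν : N, fm ≤ ‖f ν‖)
    (Lam : Y →L[ℝ] Y) (hLamSA : IsSelfAdjoint Lam)
    (hLamPos : ∀ v : Y, v ≠ 0 → 0 < ⟪Lam v, v⟫)
    (hdom : ∀ (ν : N) (v : Y), ⟪Lam v, v⟫ ≤ ⟪(L ν) (adjoint (L ν) v), v⟫)
    (vt : N → Y) (hvt0 : ∀ ν : N, vt ν ≠ 0)
    (hEL : ∀ ν : N, (L ν) (adjoint (L ν) (vt ν)) + (ε / ‖vt ν‖) • vt ν - f ν = 0) :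
    ∃ vp : ℝ, ∀ ν : N, ‖vt ν‖ ≤ vp := by
  cases isEmpty_or_nonempty N with
  | inl h => exact ⟨0, fun ν => (IsEmpty.false ν).elim⟩
  | inr h =>
  -- symmetry of Lam
  have hsym : ∀ x y : Y, ⟪Lam x, y⟫ = ⟪x, Lam y⟫ := by
    intro x y
    exact (isSelfAdjoint_iff_isSymmetric.mp hLamSA) x y
  -- nonnegativity of ⟪Lam x, x⟫
  have hpos : ∀ x : Y, 0 ≤ ⟪Lam x, x⟫ := by
    intro x
    by_cases hx : x = 0
    · simp [hx]
    · exact (hLamPos x hx).le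
  -- density of range Lam
  have hdense : (LinearMap.range (Lam : Y →ₗ[ℝ] Y) : Submodule ℝ Y).topologicalClosure = ⊤ := by
    rw [Submodule.topologicalClosure_eq_top_iff, Submodule.eq_bot_iff]
    intro x hx
    by_contra hx0
    have h1 : ⟪Lam x, x⟫ = 0 := by
      have := (Submodule.mem_orthogonal _ x).mp hx (Lam x) (LinearMap.mem_range_self _ x)
      simpa [real_inner_comm] using this
    exact (hLamPos x hx0).ne' h1
  have hdense' : ∀ y : Y, ∃ w : Y, ‖y - Lam w‖ < ε / 8 := by
    intro y
    have hy : y ∈ closure ((LinearMap.range (Lam : Y →ₗ[ℝ] Y) : Submodule ℝ Y) : Set Y) := by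
      rw [← Submodule.topologicalClosure_coe, hdense]
      trivial
    rcases Metric.mem_closure_iff.mp hy (ε / 8) (by linarith) with ⟨z, hz, hdz⟩
    rcases hz with ⟨w, rfl⟩
    exact ⟨w, by rwa [← dist_eq_norm]⟩
  choose wfun hwfun using hdense'
  -- finite cover of the compact range of f
  have hK : IsCompact (Set.range f) := isCompact_range hf
  rcases (Metric.totallyBounded_iff.mp hK.totallyBounded (ε / 8) (by linarith)) with
    ⟨tset, htfin, htcov⟩
  -- uniform bound on the approximants
  obtain ⟨W, hW0, hWb⟩ : ∃ W : ℝ, 0 ≤ W ∧ ∀ y ∈ tset, ‖wfun y‖ ≤ W := by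
    rcases (htfin.image (fun y => ‖wfun y‖)).bddAbove with ⟨W', hW'⟩
    refine ⟨max W' 0, le_max_right _ _, fun y hy => ?_⟩
    exact le_trans (hW' (Set.mem_image_of_mem _ hy)) (le_max_left _ _)
  -- uniform bound on ‖f ν‖
  obtain ⟨ν₀, -, hν₀⟩ := isCompact_univ.exists_isMaxOn Set.univ_nonempty
    (continuous_norm.comp hf).continuousOn
  set F := ‖f ν₀‖ with hF
  have hFf : ∀ ν : N, ‖f ν‖ ≤ F := fun ν => hν₀ (Set.mem_univ ν)
  have hF0 : 0 < F + ε := by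
    have := le_trans (le_trans hfm.le (hflb ν₀)) (le_refl F)
    linarith
  refine ⟨16 * W ^ 2 * ‖Lam‖ * (F + ε) / (9 * ε ^ 2), fun ν => ?_⟩
  set v := vt ν with hv
  set t := ‖v‖ with htdef
  have ht : 0 < t := norm_pos_iff.mpr (hvt0 ν)
  -- rearrange Euler-Lagrange
  have hA : (L ν) (adjoint (L ν) v) = f ν - (ε / t) • v := by
    have h := hEL ν
    rw [sub_eq_zero] at h
    rw [eq_sub_iff_add_eq]
    exact h
  set a := ⟪(L ν) (adjoint (L ν) v), v⟫ with ha
  have hfv : ⟪f ν, v⟫ = a + ε * t := by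
    have h1 : f ν = (L ν) (adjoint (L ν) v) + (ε / t) • v := by
      rw [hA]; abel
    rw [h1, inner_add_left, real_inner_smul_left, real_inner_self_eq_norm_sq, ← htdef]
    have : ε / t * t ^ 2 = ε * t := by
      field_simp
    rw [this]
  have h0a : 0 ≤ ⟪Lam v, v⟫ := hpos v
  have haa : ⟪Lam v, v⟫ ≤ a := hdom ν v
  -- norm bound on A v
  have hAnorm : ‖(L ν) (adjoint (L ν) v)‖ ≤ F + ε := by
    rw [hA]
    calc ‖f ν - (ε / t) • v‖ ≤ ‖f ν‖ + ‖(ε / t) • v‖ := norm_sub_le _ _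
    _ = ‖f ν‖ + (ε / t) * t := by
        rw [norm_smul, Real.norm_eq_abs, abs_of_nonneg (by positivity : (0:ℝ) ≤ ε / t)]
    _ = ‖f ν‖ + ε := by field_simp
    _ ≤ F + ε := by linarith [hFf ν]
  have ha_le : a ≤ (F + ε) * t := by
    calc a ≤ ‖(L ν) (adjoint (L ν) v)‖ * ‖v‖ := real_inner_le_norm _ _
    _ ≤ (F + ε) * t := by
        rw [← htdef]
        exact mul_le_mul_of_nonneg_right hAnorm (norm_nonneg v)
  have hLamvv : ⟪Lam v, v⟫ ≤ (F + ε) * t := le_trans haa ha_le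
  have hCS : ‖Lam v‖ ^ 2 ≤ ‖Lam‖ * ((F + ε) * t) := by
    calc ‖Lam v‖ ^ 2 ≤ ‖Lam‖ * ⟪Lam v, v⟫ := semi_cauchy_schwarz Lam hsym hpos v
    _ ≤ ‖Lam‖ * ((F + ε) * t) := by
        exact mul_le_mul_of_nonneg_left hLamvv (norm_nonneg _)
  -- approximate f ν by Lam w with ‖w‖ ≤ W
  obtain ⟨y, hyt, hyball⟩ : ∃ y ∈ tset, f ν ∈ Metric.ball y (ε / 8) := by
    have : f ν ∈ ⋃ y ∈ tset, Metric.ball y (ε / 8) := htcov (Set.mem_range_self ν)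
    simpa using this
  have happrox : ‖f ν - Lam (wfun y)‖ ≤ ε / 4 := by
    have h1 : ‖f ν - y‖ < ε / 8 := by rwa [← dist_eq_norm, ← Metric.mem_ball]
    have h2 : ‖y - Lam (wfun y)‖ < ε / 8 := hwfun y
    calc ‖f ν - Lam (wfun y)‖ = ‖(f ν - y) + (y - Lam (wfun y))‖ := by abel_nf
    _ ≤ ‖f ν - y‖ + ‖y - Lam (wfun y)‖ := norm_add_le _ _
    _ ≤ ε / 4 := by linarith
  have hwW : ‖wfun y‖ ≤ W := hWb y hyt
  have hfv2 : ⟪f ν, v⟫ ≤ W * ‖Lam v‖ + (ε / 4) * t := by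
    have hsplit : ⟪f ν, v⟫ = ⟪f ν - Lam (wfun y), v⟫ + ⟪Lam (wfun y), v⟫ := by
      rw [← inner_add_left]
      congr 1
      abel
    rw [hsplit]
    have h1 : ⟪f ν - Lam (wfun y), v⟫ ≤ (ε / 4) * t := by
      calc ⟪f ν - Lam (wfun y), v⟫ ≤ ‖f ν - Lam (wfun y)‖ * ‖v‖ := real_inner_le_norm _ _
      _ ≤ (ε / 4) * t := by
          rw [← htdef]
          exact mul_le_mul_of_nonneg_right happrox (norm_nonneg v)
    have h2 : ⟪Lam (wfun y), v⟫ ≤ W * ‖Lam v‖ := by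
      calc ⟪Lam (wfun y), v⟫ = ⟪wfun y, Lam v⟫ := hsym _ _
      _ ≤ ‖wfun y‖ * ‖Lam v‖ := real_inner_le_norm _ _
      _ ≤ W * ‖Lam v‖ := mul_le_mul_of_nonneg_right hwW (norm_nonneg _)
    linarith
  -- conclude
  have hkey : (3 / 4) * ε * t ≤ W * ‖Lam v‖ := by
    have : ε * t ≤ a + ε * t := by linarith
    nlinarith [hfv, hfv2]
  have hsq : ((3 / 4) * ε * t) ^ 2 ≤ W ^ 2 * (‖Lam‖ * ((F + ε) * t)) := by
    have h1 : ((3 / 4) * ε * t) ^ 2 ≤ (W * ‖Lam v‖) ^ 2 := by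
      apply sq_le_sq'
      · nlinarith [mul_nonneg hW0 (norm_nonneg (Lam v)), ht.le, hε.le]
      · exact hkey
    calc ((3 / 4) * ε * t) ^ 2 ≤ (W * ‖Lam v‖) ^ 2 := h1
    _ = W ^ 2 * ‖Lam v‖ ^ 2 := by ring
    _ ≤ W ^ 2 * (‖Lam‖ * ((F + ε) * t)) := by
        exact mul_le_mul_of_nonneg_left hCS (sq_nonneg W)
  rw [le_div_iff₀ (by positivity : (0:ℝ) < 9 * ε ^ 2)]
  have hfin : t * (9 * ε ^ 2) * t ≤ 16 * W ^ 2 * ‖Lam‖ * (F + ε) * t := by nlinarith [hsq]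
  exact le_of_mul_le_mul_right hfin ht
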